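/- arXiv:0807.2027 — 11 statements merged into one kernel-verified Lean document; each statement's English description precedes it below -/
import Mathlib

section
/- Let G be a group, H a subgroup of G, and A, B finite subsets of G. If r is the number of left cosets of H that intersect A, then |A·B| ≥ r · |B ∩ H|. -/
open Finset Pointwise

/-- If `r` is the number of left cosets of `H` intersecting `A`, then
`|A·B| ≥ r · |B ∩ H|`. -/
theorem stmt1 {G : Type*} [Group G] [DecidableEq G] (H : Subgroup G)
    [DecidablePred (· ∈ H)] [DecidableEq (G ⧸ H)] (A B : Finset G) :
    (A.image (QuotientGroup.mk : G → G ⧸ H)).card * (B.filter (· ∈ H)).card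
      ≤ (A * B).card := by
  classical
  set S := A.image (QuotientGroup.mk : G → G ⧸ H) with hS
  set C := B.filter (· ∈ H) with hC
  have hrep : ∀ q ∈ S, ∃ a ∈ A, (QuotientGroup.mk a : G ⧸ H) = q := by
    intro q hq
    simpa using Finset.mem_image.mp hq
  set g : G ⧸ H → G := fun q =>
    if h : ∃ a ∈ A, (QuotientGroup.mk a : G ⧸ H) = q then h.choose else 1 with hg
  have hgA : ∀ q ∈ S, g q ∈ A := by
    intro q hq
    have h := hrep q hq
    simp only [hg, dif_pos h]
    exact h.choose_spec.1
  have hgq : ∀ q ∈ S, (QuotientGroup.mk (g q) : G ⧸ H) = q := by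
    intro q hq
    have h := hrep q hq
    simp only [hg, dif_pos h]
    exact h.choose_spec.2
  have hsub : S.biUnion (fun q => g q • C) ⊆ A * B := by
    intro x hx
    obtain ⟨q, hq, hx⟩ := Finset.mem_biUnion.mp hx
    obtain ⟨c, hc, rfl⟩ := Finset.mem_smul_finset.mp hx
    exact Finset.mul_mem_mul (hgA q hq) (Finset.mem_filter.mp hc).1
  have hdisj : ∀ q1 ∈ S, ∀ q2 ∈ S, q1 ≠ q2 →
      Disjoint (g q1 • C) (g q2 • C) := by
    intro q1 h1 q2 h2 hne
    rw [Finset.disjoint_left]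
    intro x hx1 hx2
    obtain ⟨c1, hc1, rfl⟩ := Finset.mem_smul_finset.mp hx1
    obtain ⟨c2, hc2, he⟩ := Finset.mem_smul_finset.mp hx2
    apply hne
    rw [← hgq q1 h1, ← hgq q2 h2]
    have h1' : (c1 : G) ∈ H := (Finset.mem_filter.mp hc1).2
    have h2' : (c2 : G) ∈ H := (Finset.mem_filter.mp hc2).2
    have : (QuotientGroup.mk (g q1 * c1) : G ⧸ H) = QuotientGroup.mk (g q2 * c2) := by
      simp only [smul_eq_mul] at he; rw [← he]
    simpa [QuotientGroup.mk_mul_of_mem _ h1', QuotientGroup.mk_mul_of_mem _ h2'] using this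
  calc S.card * C.card = (S.biUnion (fun q => g q • C)).card := by
        rw [Finset.card_biUnion hdisj]
        simp [Finset.card_smul_finset, mul_comm]
    _ ≤ (A * B).card := Finset.card_le_card hsub
end

section
/- Let G be a group, H a subgroup of G, and A a nonempty finite subset of G. If r is the number of left cosets of H intersecting A, then |A⁻¹A ∩ H| ≥ |A|/r. In particular, if H has finite index, |A⁻¹A ∩ H| ≥ |A|/[G:H]. -/
open Finset Pointwise

/-- If `r` is the number of left cosets of `H` intersecting the nonempty finite set `A`,
then `|A⁻¹A ∩ H| ≥ |A|/r`; in particular, if `H` has finite index,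
`|A⁻¹A ∩ H| ≥ |A|/[G:H]`. -/
theorem stmt2 {G : Type*} [Group G] [DecidableEq G] (H : Subgroup G)
    [DecidablePred (· ∈ H)] [DecidableEq (G ⧸ H)] (A : Finset G) (hA : A.Nonempty) :
    A.card ≤ ((A⁻¹ * A).filter (· ∈ H)).card *
        (A.image (QuotientGroup.mk : G → G ⧸ H)).card ∧
    (H.index ≠ 0 → A.card ≤ ((A⁻¹ * A).filter (· ∈ H)).card * H.index) := by
  have key : A.card ≤ ((A⁻¹ * A).filter (· ∈ H)).card *
      (A.image (QuotientGroup.mk : G → G ⧸ H)).card := by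
    apply Finset.card_le_mul_card_image
    intro q hq
    obtain ⟨b, hb, hbq⟩ := Finset.mem_image.mp hq
    apply Finset.card_le_card_of_injOn (fun x => b⁻¹ * x)
    · intro x hx
      rw [Finset.mem_coe, Finset.mem_filter] at hx ⊢
      constructor
      · exact Finset.mul_mem_mul (Finset.inv_mem_inv hb) hx.1
      · have : (QuotientGroup.mk x : G ⧸ H) = QuotientGroup.mk b := by
          rw [hx.2, hbq]
        exact (QuotientGroup.eq).mp this.symm
    · intro x _ y _ h
      exact mul_left_cancel h
  refine ⟨key, fun hind => ?_⟩
  refine key.trans (Nat.mul_le_mul_left _ ?_)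
  have hfin : Finite (G ⧸ H) := Nat.finite_of_card_ne_zero hind
  haveI := Fintype.ofFinite (G ⧸ H)
  calc (A.image (QuotientGroup.mk : G → G ⧸ H)).card ≤ Fintype.card (G ⧸ H) :=
        Finset.card_le_univ _
    _ = H.index := by rw [Subgroup.index, Nat.card_eq_fintype_card]
end

section
/- Let G be a group, H a subgroup, and A a nonempty finite subset of G. For any k > 0, |A_{2k+1}| ≥ (|(A⁻¹A ∩ H)_k| / |A⁻¹A ∩ H|) · |A|, where for a set S, S_m denotes the set of all products of at most m elements of S ∪ S⁻¹ ∪ {1}. -/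
open Finset Pointwise

/-- `S_m`: products of at most `m` elements of `S ∪ S⁻¹ ∪ {1}`. -/
def wordSet {G : Type*} [Group G] [DecidableEq G] (S : Finset G) (m : ℕ) : Finset G :=
  (S ∪ S⁻¹ ∪ {1}) ^ m

/-- Counting lemma: if every element of `X` lies in `H`, then
`|X|·|A| ≤ |A·X|·|A⁻¹A ∩ H|`. -/
lemma key_count {G : Type*} [Group G] [DecidableEq G] (H : Subgroup G)
    [DecidablePred (· ∈ H)] (A X : Finset G) (hX : ∀ x ∈ X, x ∈ H) :
    X.card * A.card ≤ (A * X).card * ((A⁻¹ * A).filter (· ∈ H)).card := by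
  set B := (A⁻¹ * A).filter (· ∈ H) with hBdef
  have main : (A ×ˢ X).card * 1 ≤ (A * X).card * B.card := by
    apply Finset.card_mul_le_card_mul (fun p y => p.1 * p.2 = y)
    · rintro ⟨a, x⟩ hp
      simp only [Finset.mem_product] at hp
      have : a * x ∈ (A * X).bipartiteAbove (fun p y => p.1 * p.2 = y) (a, x) := by
        simp [Finset.mem_bipartiteAbove, Finset.mul_mem_mul hp.1 hp.2]
      exact Finset.card_pos.mpr ⟨_, this⟩
    · intro y hy
      rw [Finset.mem_mul] at hy
      obtain ⟨a₀, ha₀, x₀, hx₀, hmul⟩ := hy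
      apply Finset.card_le_card_of_injOn (fun p => a₀⁻¹ * p.1)
      · rintro ⟨a, x⟩ hp
        rw [Finset.mem_coe, Finset.mem_bipartiteBelow] at hp
        obtain ⟨hp, heq⟩ := hp
        rw [Finset.mem_product] at hp
        have hxH := hX x hp.2
        have hx₀H := hX x₀ hx₀
        have hrel : a₀⁻¹ * a = x₀ * x⁻¹ := by
          have h : a₀ * x₀ = a * x := by rw [hmul, heq]
          calc a₀⁻¹ * a = a₀⁻¹ * (a * x) * x⁻¹ := by group
            _ = a₀⁻¹ * (a₀ * x₀) * x⁻¹ := by rw [← h]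
            _ = x₀ * x⁻¹ := by group
        simp only [Finset.mem_coe]; rw [hBdef, Finset.mem_filter]
        constructor
        · exact Finset.mul_mem_mul (Finset.inv_mem_inv ha₀) hp.1
        · rw [hrel]; exact H.mul_mem hx₀H (H.inv_mem hxH)
      · rintro ⟨a, x⟩ hp ⟨a', x'⟩ hp' hf
        rw [Finset.mem_coe, Finset.mem_bipartiteBelow] at hp hp'
        have ha : a = a' := by
          have := mul_left_cancel hf
          exact this
        have hx : x = x' := by
          have h1 : a * x = y := hp.2
          have h2 : a' * x' = y := hp'.2
          rw [← ha] at h2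
          exact mul_left_cancel (h1.trans h2.symm)
        simp [ha, hx]
  rw [Finset.card_product, mul_one] at main
  calc X.card * A.card = A.card * X.card := mul_comm _ _
    _ ≤ (A * X).card * B.card := main

/-- `|A_{2k+1}| ≥ (|(A⁻¹A ∩ H)_k| / |A⁻¹A ∩ H|)·|A|`. -/
theorem stmt3 {G : Type*} [Group G] [DecidableEq G] (H : Subgroup G)
    [DecidablePred (· ∈ H)] (A : Finset G) (hA : A.Nonempty) (k : ℕ) (hk : 0 < k) :
    (wordSet ((A⁻¹ * A).filter (· ∈ H)) k).card * A.card
      ≤ (wordSet A (2 * k + 1)).card * ((A⁻¹ * A).filter (· ∈ H)).card := by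
  set B := (A⁻¹ * A).filter (· ∈ H) with hBdef
  obtain ⟨a, ha⟩ := hA
  have hB1 : (1 : G) ∈ B := by
    rw [hBdef, Finset.mem_filter]
    exact ⟨by simpa using Finset.mul_mem_mul (Finset.inv_mem_inv ha) ha, H.one_mem⟩
  have hsymm : ∀ x : G, x ∈ A⁻¹ * A → x⁻¹ ∈ A⁻¹ * A := by
    intro x hx
    rw [Finset.mem_mul] at hx ⊢
    obtain ⟨u, hu, v, hv, rfl⟩ := hx
    rw [Finset.mem_inv] at hu
    obtain ⟨y, hy, rfl⟩ := hu
    exact ⟨v⁻¹, Finset.inv_mem_inv hv, y, hy, by group⟩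
  have hBinv : B⁻¹ = B := by
    ext x
    simp only [hBdef, Finset.mem_inv', Finset.mem_filter]
    constructor
    · rintro ⟨hx, hxH⟩
      exact ⟨by simpa using hsymm _ hx, by simpa using H.inv_mem hxH⟩
    · rintro ⟨hx, hxH⟩
      exact ⟨hsymm _ hx, H.inv_mem hxH⟩
  have hBw : wordSet B k = B ^ k := by
    unfold wordSet
    rw [hBinv, Finset.union_self,
      Finset.union_eq_left.mpr (Finset.singleton_subset_iff.mpr hB1)]
  have hBH : ∀ x ∈ B, x ∈ H := fun x hx => (Finset.mem_filter.mp hx).2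
  have hXH : ∀ n, ∀ x ∈ B ^ n, x ∈ H := by
    intro n
    induction n with
    | zero => intro x hx; simp at hx; simp [hx, H.one_mem]
    | succ m ih =>
      intro x hx
      rw [pow_succ, Finset.mem_mul] at hx
      obtain ⟨u, hu, v, hv, rfl⟩ := hx
      exact H.mul_mem (ih u hu) (hBH v hv)
  -- A * B^k ⊆ wordSet A (2k+1)
  set S := A ∪ A⁻¹ ∪ {1} with hSdef
  have hAS : A ⊆ S := by
    intro x hx; rw [hSdef]; exact Finset.mem_union_left _ (Finset.mem_union_left _ hx)
  have hAiS : A⁻¹ ⊆ S := by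
    intro x hx; rw [hSdef]; exact Finset.mem_union_left _ (Finset.mem_union_right _ hx)
  have hBS : B ⊆ S ^ 2 := by
    intro x hx
    have : x ∈ A⁻¹ * A := (Finset.mem_filter.mp hx).1
    rw [sq]
    exact Finset.mul_subset_mul hAiS hAS this
  have hsub : A * B ^ k ⊆ wordSet A (2 * k + 1) := by
    have h1 : B ^ k ⊆ (S ^ 2) ^ k := Finset.pow_subset_pow_left hBS
    have h2 : A * B ^ k ⊆ S * (S ^ 2) ^ k := Finset.mul_subset_mul hAS h1
    have h3 : S * (S ^ 2) ^ k = S ^ (2 * k + 1) := by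
      rw [← pow_mul, pow_succ']
    unfold wordSet
    rw [← hSdef, ← h3]
    exact h2
  calc (wordSet B k).card * A.card = (B ^ k).card * A.card := by rw [hBw]
    _ ≤ (A * B ^ k).card * B.card := key_count H A (B ^ k) (hXH k)
    _ ≤ (wordSet A (2 * k + 1)).card * B.card :=
        Nat.mul_le_mul_right _ (Finset.card_le_card hsub)
end

section
/- Let G be a group, H a normal subgroup, π : G → G/H the quotient map, and A₁, A₂ finite nonempty subsets of G. Then |(A₁ ∪ A₂)_4| ≥ (|π(A₁A₂)| / |π(A₁)|) · |A₁|, where S_4 denotes the set of products of at most 4 elements of S ∪ S⁻¹ ∪ {1}. -/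
open Finset Pointwise

/-- `|(A₁ ∪ A₂)_4| ≥ (|π(A₁A₂)|/|π(A₁)|)·|A₁|` for the quotient map `π : G → G/H`. -/
theorem stmt4 {G : Type*} [Group G] [DecidableEq G] (H : Subgroup G) [H.Normal]
    [DecidableEq (G ⧸ H)] (A₁ A₂ : Finset G) (h₁ : A₁.Nonempty) (h₂ : A₂.Nonempty) :
    ((A₁ * A₂).image (QuotientGroup.mk : G → G ⧸ H)).card * A₁.card
      ≤ (wordSet (A₁ ∪ A₂) 4).card *
          (A₁.image (QuotientGroup.mk : G → G ⧸ H)).card := by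
  classical
  set π : G → G ⧸ H := QuotientGroup.mk with hπ
  set Q := A₁.image π with hQ
  have hQne : Q.Nonempty := h₁.image _
  obtain ⟨q₀, hq₀Q, hq₀max⟩ :=
    Q.exists_max_image (fun q => (A₁.filter (fun a => π a = q)).card) hQne
  set B := A₁.filter (fun a => π a = q₀) with hB
  have hBne : B.Nonempty := by
    obtain ⟨a, ha, rfl⟩ := mem_image.mp hq₀Q
    exact ⟨a, mem_filter.mpr ⟨ha, rfl⟩⟩
  obtain ⟨b₀, hb₀⟩ := hBne
  have hcard1 : A₁.card ≤ Q.card * B.card := by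
    have hfib := Finset.card_eq_sum_card_fiberwise
      (f := π) (s := A₁) (t := Q) (fun a ha => mem_image_of_mem _ ha)
    rw [hfib]
    calc ∑ q ∈ Q, (A₁.filter (fun a => π a = q)).card
        ≤ ∑ _q ∈ Q, B.card := Finset.sum_le_sum (fun q hq => hq₀max q hq)
      _ = Q.card * B.card := by rw [Finset.sum_const, smul_eq_mul]
  set P := (A₁ * A₂).image π with hP
  have hrep : ∀ c ∈ P, ∃ x, x ∈ A₁ * A₂ ∧ π x = c := by
    intro c hc
    obtain ⟨x, hx, rfl⟩ := mem_image.mp hc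
    exact ⟨x, hx, rfl⟩
  choose! t ht1 ht2 using hrep
  have hb₀A : b₀ ∈ A₁ := (mem_filter.mp hb₀).1
  have hb₀π : π b₀ = q₀ := (mem_filter.mp hb₀).2
  have hinj : P.card * B.card ≤ (wordSet (A₁ ∪ A₂) 4).card := by
    rw [← Finset.card_product]
    apply Finset.card_le_card_of_injOn (fun p => t p.1 * b₀⁻¹ * p.2)
    · rintro ⟨c, b⟩ hp
      simp only [Finset.mem_coe, mem_product] at hp
      obtain ⟨hc, hbmem⟩ := hp
      obtain ⟨a₁, ha₁, a₂, ha₂, heq⟩ := Finset.mem_mul.mp (ht1 c hc)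
      have hbA : b ∈ A₁ := (mem_filter.mp hbmem).1
      set T : Finset G := (A₁ ∪ A₂) ∪ (A₁ ∪ A₂)⁻¹ ∪ {1} with hT
      have hmemT : ∀ x ∈ A₁, x ∈ T := fun x hx =>
        mem_union_left _ (mem_union_left _ (mem_union_left _ hx))
      have hmemT2 : a₂ ∈ T :=
        mem_union_left _ (mem_union_left _ (mem_union_right _ ha₂))
      have hinvT : b₀⁻¹ ∈ T := by
        refine mem_union_left _ (mem_union_right _ ?_)
        exact Finset.inv_mem_inv (mem_union_left _ hb₀A)
      show t c * b₀⁻¹ * b ∈ T ^ 4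
      have : t c * b₀⁻¹ * b = a₁ * a₂ * b₀⁻¹ * b := by rw [heq]
      rw [this, show (4 : ℕ) = 3 + 1 by rfl, pow_succ,
        show (3 : ℕ) = 2 + 1 by rfl, pow_succ, sq]
      exact mul_mem_mul (mul_mem_mul (mul_mem_mul (hmemT _ ha₁) hmemT2) hinvT)
        (hmemT _ hbA)
    · rintro ⟨c, b⟩ hp ⟨c', b'⟩ hp' h
      simp only [Finset.mem_coe, mem_product] at hp hp'
      obtain ⟨hc, hbmem⟩ := hp
      obtain ⟨hc', hbmem'⟩ := hp'
      have hπb : π b = q₀ := (mem_filter.mp hbmem).2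
      have hπb' : π b' = q₀ := (mem_filter.mp hbmem').2
      have hcc : c = c' := by
        have := congrArg π h
        simp only [hπ, QuotientGroup.mk_mul, QuotientGroup.mk_inv] at this
        rw [show (QuotientGroup.mk (t c) : G ⧸ H) = c from ht2 c hc,
          show (QuotientGroup.mk (t c') : G ⧸ H) = c' from ht2 c' hc'] at this
        rw [show (QuotientGroup.mk b : G ⧸ H) = q₀ from hπb,
          show (QuotientGroup.mk b' : G ⧸ H) = q₀ from hπb',
          show (QuotientGroup.mk b₀ : G ⧸ H) = q₀ from hb₀π] at this
        simpa using this
      subst hcc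
      have hbb : b = b' := by
        have := mul_left_cancel h
        exact this
      simp [hbb]
  calc P.card * A₁.card ≤ P.card * (Q.card * B.card) :=
        Nat.mul_le_mul_left _ hcard1
    _ = (P.card * B.card) * Q.card := by ring
    _ ≤ (wordSet (A₁ ∪ A₂) 4).card * Q.card := Nat.mul_le_mul_right _ hinj
end

section
/- Let G be a group, H a normal subgroup, π : G → G/H the quotient map. Let A be a finite subset of G and A' ⊆ A. Then |A' · (A⁻¹A ∩ H)| ≥ (|π(A')| / |π(A)|) · |A|. -/
open Finset Pointwise

/-- `|A'·(A⁻¹A ∩ H)| ≥ (|π(A')|/|π(A)|)·|A|` for the quotient map `π : G → G/H`. -/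
theorem stmt5 {G : Type*} [Group G] [DecidableEq G] (H : Subgroup G) [H.Normal]
    [DecidablePred (· ∈ H)] [DecidableEq (G ⧸ H)]
    (A A' : Finset G) (hA : A.Nonempty) (hsub : A' ⊆ A) :
    (A'.image (QuotientGroup.mk : G → G ⧸ H)).card * A.card
      ≤ (A' * ((A⁻¹ * A).filter (· ∈ H))).card *
          (A.image (QuotientGroup.mk : G → G ⧸ H)).card := by
  set π : G → G ⧸ H := QuotientGroup.mk with hπ
  -- choose a0 with maximal fiber
  obtain ⟨a0, ha0, hmax⟩ := A.exists_max_image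
    (fun a => (A.filter (fun x => π x = π a)).card) hA
  set F : Finset G := A.filter (fun x => π x = π a0) with hF
  set S : Finset G := A' * ((A⁻¹ * A).filter (· ∈ H)) with hS
  -- |A| ≤ |F| * |π(A)|
  have h1 : A.card ≤ F.card * (A.image π).card := by
    refine card_le_mul_card_image_of_maps_to (fun a ha => mem_image_of_mem _ ha) _ ?_
    intro b hb
    obtain ⟨a, ha, rfl⟩ := mem_image.mp hb
    exact hmax a ha
  -- |F| * |π(A')| ≤ |S|
  have h2 : F.card * (A'.image π).card ≤ S.card := by
    refine mul_card_image_le_card_of_maps_to (f := π) ?_ _ ?_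
    · intro s hs
      rw [hS, mem_mul] at hs
      obtain ⟨a', ha', k, hk, rfl⟩ := hs
      have hkH : k ∈ H := (mem_filter.mp hk).2
      have : π (a' * k) = π a' := by
        simp only [hπ, QuotientGroup.mk_mul]
        rw [(QuotientGroup.eq_one_iff k).mpr hkH, mul_one]
      rw [this]
      exact mem_image_of_mem _ ha'
    · intro b hb
      obtain ⟨a', ha', rfl⟩ := mem_image.mp hb
      have hsub2 : (a' * a0⁻¹) • F ⊆ S.filter (fun s => π s = π a') := by
        intro x hx
        rw [mem_smul_finset] at hx
        obtain ⟨y, hy, rfl⟩ := hx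
        have hyA : y ∈ A := (mem_filter.mp hy).1
        have hyπ : π y = π a0 := (mem_filter.mp hy).2
        have hmem : a0⁻¹ * y ∈ H := by
          rw [← QuotientGroup.eq_one_iff]
          simp only [hπ] at hyπ
          simp [QuotientGroup.mk_mul, hyπ]
        refine mem_filter.mpr ⟨?_, ?_⟩
        · rw [hS, mem_mul]
          refine ⟨a', ha', a0⁻¹ * y, ?_, by simp [smul_eq_mul, mul_assoc]⟩
          refine mem_filter.mpr ⟨?_, hmem⟩
          exact mul_mem_mul (inv_mem_inv ha0) hyA
        · show π ((a' * a0⁻¹) • y) = π a'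
          have : (a' * a0⁻¹) • y = a' * (a0⁻¹ * y) := by
            simp [smul_eq_mul, mul_assoc]
          rw [this, hπ, QuotientGroup.mk_mul,
            (QuotientGroup.eq_one_iff (a0⁻¹ * y)).mpr hmem, mul_one]
      calc F.card = ((a' * a0⁻¹) • F).card := (card_smul_finset _ _).symm
        _ ≤ (S.filter (fun s => π s = π a')).card := card_le_card hsub2
  calc (A'.image π).card * A.card
      ≤ (A'.image π).card * (F.card * (A.image π).card) :=
        Nat.mul_le_mul_left _ h1
    _ = (F.card * (A'.image π).card) * (A.image π).card := by ring
    _ ≤ S.card * (A.image π).card := Nat.mul_le_mul_right _ h2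
end

section
/- Let A and B be finite sets and S ⊆ A × B. For each a ∈ A let B_a = {b ∈ B : (a,b) ∈ S}. Then there exists a₀ ∈ A such that Σ_{a ∈ A} |B_{a₀} ∩ B_a| ≥ |S|² / (|A|·|B|). -/
open Finset

/-- Counting lemma: for `S ⊆ A × B` with fibers `B_a`, there is `a₀ ∈ A` with
`Σ_{a ∈ A} |B_{a₀} ∩ B_a| ≥ |S|²/(|A|·|B|)`. -/
theorem stmt7 {α β : Type*} [DecidableEq α] [DecidableEq β]
    (A : Finset α) (B : Finset β) (hA : A.Nonempty) (hB : B.Nonempty)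
    (S : Finset (α × β)) (hS : S ⊆ A ×ˢ B) :
    ∃ a₀ ∈ A,
      S.card ^ 2 ≤
        (∑ a ∈ A, ((B.filter fun b => (a₀, b) ∈ S) ∩ (B.filter fun b => (a, b) ∈ S)).card) *
          (A.card * B.card) := by
  classical
  let c : β → ℕ := fun b => (A.filter fun a => (a, b) ∈ S).card
  let f : α → ℕ := fun a₀ =>
    ∑ a ∈ A, ((B.filter fun b => (a₀, b) ∈ S) ∩ (B.filter fun b => (a, b) ∈ S)).card
  -- |S| = ∑ b, c b
  have h1 : S.card = ∑ b ∈ B, c b := by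
    rw [card_eq_sum_card_fiberwise (f := Prod.snd) (fun p hp => (mem_product.mp (hS hp)).2)]
    refine Finset.sum_congr rfl fun b hb => ?_
    apply Finset.card_bij (fun p _ => p.1)
    · intro p hp
      simp only [mem_filter] at hp ⊢
      obtain ⟨hp1, hp2⟩ := hp
      exact ⟨(mem_product.mp (hS hp1)).1, by rw [← hp2]; exact hp1⟩
    · intro p hp q hq h
      simp only [mem_filter] at hp hq
      exact Prod.ext h (hp.2.trans hq.2.symm)
    · intro a ha
      simp only [mem_filter] at ha
      exact ⟨(a, b), by simp [ha.2], rfl⟩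
  have hcard : ∀ a₀ a : α,
      ((B.filter fun b => (a₀, b) ∈ S) ∩ (B.filter fun b => (a, b) ∈ S)).card =
      ∑ b ∈ B, (if (a₀, b) ∈ S then 1 else 0) * (if (a, b) ∈ S then 1 else 0) := by
    intro a₀ a
    rw [← Finset.filter_and, Finset.card_filter]
    refine Finset.sum_congr rfl fun b _ => by split_ifs <;> simp_all
  have h2 : ∑ a₀ ∈ A, f a₀ = ∑ b ∈ B, c b ^ 2 :=
    calc ∑ a₀ ∈ A, f a₀
        = ∑ a₀ ∈ A, ∑ b ∈ B, ∑ a ∈ A,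
            (if (a₀, b) ∈ S then 1 else 0) * (if (a, b) ∈ S then 1 else 0) :=
          Finset.sum_congr rfl fun a₀ _ => by
            show (∑ a ∈ A, ((B.filter fun b => (a₀, b) ∈ S) ∩
                (B.filter fun b => (a, b) ∈ S)).card) = _
            rw [Finset.sum_congr rfl fun a _ => hcard a₀ a]
            exact Finset.sum_comm
      _ = ∑ b ∈ B, ∑ a₀ ∈ A, ∑ a ∈ A,
            (if (a₀, b) ∈ S then 1 else 0) * (if (a, b) ∈ S then 1 else 0) :=
          Finset.sum_comm
      _ = ∑ b ∈ B, c b ^ 2 := Finset.sum_congr rfl fun b _ => by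
            rw [← Finset.sum_mul_sum]
            show (∑ a ∈ A, if (a, b) ∈ S then 1 else 0) *
                (∑ a ∈ A, if (a, b) ∈ S then 1 else 0) =
                (A.filter fun a => (a, b) ∈ S).card ^ 2
            rw [sq, Finset.card_filter]
  -- Cauchy–Schwarz
  have h3 : (∑ b ∈ B, c b) ^ 2 ≤ B.card * ∑ b ∈ B, c b ^ 2 := by
    have h0 := sq_sum_le_card_mul_sum_sq (s := B) (f := fun b => (c b : ℝ))
    have h' : ((∑ b ∈ B, c b : ℕ) : ℝ) ^ 2 ≤ (B.card : ℝ) * ((∑ b ∈ B, c b ^ 2 : ℕ) : ℝ) := by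
      push_cast
      exact h0
    exact_mod_cast h'
  obtain ⟨a₀, ha₀, hmax⟩ := Finset.exists_max_image A f hA
  refine ⟨a₀, ha₀, ?_⟩
  have h4 : ∑ a ∈ A, f a ≤ A.card * f a₀ := by
    calc ∑ a ∈ A, f a ≤ ∑ _a ∈ A, f a₀ := Finset.sum_le_sum fun a ha => hmax a ha
    _ = A.card * f a₀ := by rw [Finset.sum_const, smul_eq_mul]
  calc S.card ^ 2 = (∑ b ∈ B, c b) ^ 2 := by rw [h1]
    _ ≤ B.card * ∑ b ∈ B, c b ^ 2 := h3
    _ = B.card * ∑ a ∈ A, f a := by rw [h2]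
    _ ≤ B.card * (A.card * f a₀) := Nat.mul_le_mul_left _ h4
    _ = f a₀ * (A.card * B.card) := by ring
end

section
/- Let G be a group acting on an abelian group R (written additively) by automorphisms. Suppose there is a central element z ∈ Z(G) with z² = e such that z·v = −v for all v ∈ R, and suppose every element of R is uniquely 2-divisible. Then every 1-cocycle is a coboundary: for any map s : G → R satisfying s(g₁g₂) = s(g₁) + g₁·s(g₂) for all g₁, g₂ ∈ G, there exists v ∈ R such that s(g) = g·v − v for all g ∈ G. -/
/-- Let `G` act on an abelian group `R` by automorphisms. If some central
involution `z` acts as `-1` on `R`, and `R` is uniquely 2-divisible, then every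
1-cocycle `s : G → R` is a coboundary. -/
theorem stmt8 {G R : Type*} [Group G] [AddCommGroup R] [DistribMulAction G R]
    (z : G) (hz : z ∈ Subgroup.center G) (hz2 : z * z = 1)
    (hneg : ∀ v : R, z • v = -v)
    (hdiv : ∀ r : R, ∃! r' : R, r' + r' = r)
    (s : G → R) (hs : ∀ g₁ g₂ : G, s (g₁ * g₂) = s g₁ + g₁ • s g₂) :
    ∃ v : R, ∀ g : G, s g = g • v - v := by
  obtain ⟨v, hv, _⟩ := hdiv (-(s z))
  have hv' : v + v = -(s z) := hv
  refine ⟨v, fun g => ?_⟩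
  have hcomm : g * z = z * g := (Subgroup.mem_center_iff.mp hz g)
  have key : s g + s g = s z - g • s z := by
    have h1 := hs g z
    have h2 := hs z g
    rw [hcomm, h2, hneg] at h1
    -- h1 : s z + -s g = s g + g • s z
    rw [eq_sub_iff_add_eq, add_assoc, ← h1]; abel
  obtain ⟨w, -, hw⟩ := hdiv (s z - g • s z)
  have e1 : s g = w := hw _ key
  have e2 : g • v - v = w := by
    apply hw
    have h3 : g • v + g • v = -(g • s z) := by
      rw [← smul_add, hv', smul_neg]
    calc (g • v - v) + (g • v - v) = (g • v + g • v) - (v + v) := by abel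
      _ = -(g • s z) - (-(s z)) := by rw [h3, hv']
      _ = s z - g • s z := by abel
  rw [e1, e2]
end

section
/- Let G be a group and A, A' finite nonempty subsets of G. Then there exists g ∈ A' such that |C_G(g) ∩ A⁻¹A| ≥ (|A| / |A·A'·A⁻¹|) · N, where N is the number of conjugacy classes of G that intersect A'. -/
open Finset Pointwise

/-- There is `g ∈ A'` with `|C_G(g) ∩ A⁻¹A| ≥ (|A|/|A·A'·A⁻¹|)·|Cl_G(A')|`. -/
theorem stmt10 {G : Type*} [Group G] [DecidableEq G] [DecidableEq (ConjClasses G)]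
    (A A' : Finset G) (hA : A.Nonempty) (hA' : A'.Nonempty) :
    ∃ g ∈ A',
      A.card * (A'.image ConjClasses.mk).card ≤
        ((A⁻¹ * A).filter fun x => x * g = g * x).card * (A * A' * A⁻¹).card := by
  classical
  set c : G → ℕ := fun g => ((A⁻¹ * A).filter fun x => x * g = g * x).card with hc
  obtain ⟨g, hg, hgmax⟩ := Finset.exists_max_image A' c hA'
  refine ⟨g, hg, ?_⟩
  -- representative of each conjugacy class
  have hrep : ∀ cl ∈ A'.image ConjClasses.mk, ∃ x ∈ A', ConjClasses.mk x = cl := by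
    intro cl hcl
    simpa using Finset.mem_image.mp hcl
  choose! rep hrepA' hrepmk using hrep
  set S : ConjClasses G → Finset G := fun cl => A.image (fun a => a * rep cl * a⁻¹) with hS
  -- key fiber bound
  have key : ∀ x ∈ A', A.card ≤ c x * (A.image (fun a => a * x * a⁻¹)).card := by
    intro x hx
    apply Finset.card_le_mul_card_image
    intro b hb
    obtain ⟨a0, ha0, ha0b⟩ := Finset.mem_image.mp hb
    apply Finset.card_le_card_of_injOn (fun a => a0⁻¹ * a)
    · intro a ha
      simp only [Finset.mem_filter, Finset.mem_coe] at ha ⊢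
      obtain ⟨haA, hab⟩ := ha
      constructor
      · exact Finset.mul_mem_mul (Finset.inv_mem_inv ha0) haA
      · have : a * x * a⁻¹ = a0 * x * a0⁻¹ := by rw [hab, ha0b]
        have h2 : x = a⁻¹ * (a0 * x * a0⁻¹) * a := by rw [← this]; group
        calc a0⁻¹ * a * x = a0⁻¹ * a * (a⁻¹ * (a0 * x * a0⁻¹) * a) := by
              conv_lhs => rw [h2]
          _ = x * (a0⁻¹ * a) := by group
    · intro a _ b _ hab
      exact mul_left_cancel hab
  -- each S cl is contained in the conjugacy class cl
  have hmkS : ∀ cl, ∀ y ∈ S cl, ConjClasses.mk y = ConjClasses.mk (rep cl) := by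
    intro cl y hy
    obtain ⟨a, _, rfl⟩ := Finset.mem_image.mp hy
    rw [ConjClasses.mk_eq_mk_iff_isConj]
    exact (isConj_iff.mpr ⟨a, rfl⟩).symm
  -- sum bound
  have hsum : (A'.image ConjClasses.mk).card * A.card ≤
      c g * ∑ cl ∈ A'.image ConjClasses.mk, (S cl).card := by
    rw [Finset.mul_sum, Finset.card_eq_sum_ones, Finset.sum_mul, one_mul]
    apply Finset.sum_le_sum
    intro cl hcl
    calc A.card ≤ c (rep cl) * (S cl).card := key _ (hrepA' cl hcl)
      _ ≤ c g * (S cl).card := Nat.mul_le_mul_right _ (hgmax _ (hrepA' cl hcl))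
  -- disjoint union bound
  have hdisj : ∑ cl ∈ A'.image ConjClasses.mk, (S cl).card ≤ (A * A' * A⁻¹).card := by
    rw [← Finset.card_biUnion]
    · apply Finset.card_le_card
      intro y hy
      obtain ⟨cl, hcl, hy⟩ := Finset.mem_biUnion.mp hy
      obtain ⟨a, ha, rfl⟩ := Finset.mem_image.mp hy
      exact Finset.mul_mem_mul (Finset.mul_mem_mul ha (hrepA' cl hcl)) (Finset.inv_mem_inv ha)
    · intro c1 hc1 c2 hc2 hne
      apply Finset.disjoint_left.mpr
      intro y hy1 hy2
      apply hne
      rw [← hrepmk c1 hc1, ← hrepmk c2 hc2, ← hmkS c1 y hy1, ← hmkS c2 y hy2]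
  calc A.card * (A'.image ConjClasses.mk).card
      = (A'.image ConjClasses.mk).card * A.card := Nat.mul_comm _ _
    _ ≤ c g * ∑ cl ∈ A'.image ConjClasses.mk, (S cl).card := hsum
    _ ≤ c g * (A * A' * A⁻¹).card := Nat.mul_le_mul_left _ hdisj
end

section
/- Let G be a group with commutator subgroup G⁽¹⁾ = [G,G], and let A be a finite nonempty subset of G. Then for every δ > 0, either |A·A·A⁻¹| ≥ |A|^{1+δ}, or there is g ∈ A such that |C_G(g) ∩ A⁻¹A| · |G⁽¹⁾ ∩ A⁻¹A| ≥ |A|^{1−δ}. -/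
open Finset Pointwise

/-- For every `δ > 0`, either `|A·A·A⁻¹| ≥ |A|^{1+δ}`, or there is `g ∈ A` with
`|C_G(g) ∩ A⁻¹A|·|[G,G] ∩ A⁻¹A| ≥ |A|^{1-δ}`. -/
theorem stmt11 {G : Type*} [Group G] [DecidableEq G]
    [DecidablePred (· ∈ commutator G)] (A : Finset G) (hA : A.Nonempty) :
    ∀ δ : ℝ, 0 < δ →
      ((A.card : ℝ) ^ ((1 : ℝ) + δ) ≤ ((A * A * A⁻¹).card : ℝ)) ∨
      ∃ g ∈ A,
        (A.card : ℝ) ^ ((1 : ℝ) - δ) ≤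
          (((A⁻¹ * A).filter fun x => x * g = g * x).card : ℝ) *
            (((A⁻¹ * A).filter (· ∈ commutator G)).card : ℝ) := by
  intro δ hδ
  by_cases h : ∃ g ∈ A,
      (A.card : ℝ) ^ ((1 : ℝ) - δ) ≤
        (((A⁻¹ * A).filter fun x => x * g = g * x).card : ℝ) *
          (((A⁻¹ * A).filter (· ∈ commutator G)).card : ℝ)
  · exact Or.inr h
  left
  push_neg at h
  set S : Finset G := (A⁻¹ * A).filter (· ∈ commutator G) with hS
  obtain ⟨a, ha⟩ := hA
  have hn : (0 : ℝ) < A.card := by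
    exact_mod_cast Finset.card_pos.2 ⟨a, ha⟩
  have h1S : (1 : G) ∈ S := by
    refine mem_filter.2 ⟨?_, Subgroup.one_mem _⟩
    have := mul_mem_mul (inv_mem_inv ha) ha
    simpa using this
  have hk : (0 : ℝ) < S.card := by
    exact_mod_cast Finset.card_pos.2 ⟨1, h1S⟩
  -- key fiber bound
  have key : ∀ y : G,
      (((A ×ˢ A).filter fun p => p.1 * p.2 * p.1⁻¹ = y).card : ℝ)
        ≤ (A.card : ℝ) ^ ((1 : ℝ) - δ) := by
    intro y
    set F : Finset (G × G) := (A ×ˢ A).filter fun p => p.1 * p.2 * p.1⁻¹ = y with hF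
    rcases F.eq_empty_or_nonempty with hFe | ⟨⟨a₀, g₀⟩, hp0⟩
    · rw [hFe]
      simpa using (Real.rpow_nonneg hn.le _)
    · obtain ⟨hp0m, hx0⟩ := mem_filter.1 hp0
      obtain ⟨ha0, hg0⟩ := mem_product.1 hp0m
      simp only at ha0 hg0 hx0
      set T : Finset G := A.filter fun g => g₀⁻¹ * g ∈ S with hT
      have hstep : F.card = ∑ g ∈ T, (F.filter fun p => p.2 = g).card := by
        refine card_eq_sum_card_fiberwise (fun p hp => ?_)
        obtain ⟨hpm, hpx⟩ := mem_filter.1 hp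
        obtain ⟨hp1, hp2⟩ := mem_product.1 hpm
        refine mem_filter.2 ⟨hp2, mem_filter.2 ⟨mul_mem_mul (inv_mem_inv hg0) hp2, ?_⟩⟩
        have hgw : p.2 = (p.1⁻¹ * a₀) * g₀ * (p.1⁻¹ * a₀)⁻¹ := by
          have heq : p.1 * p.2 * p.1⁻¹ = a₀ * g₀ * a₀⁻¹ := by rw [hpx, hx0]
          have h2 : p.2 = p.1⁻¹ * (a₀ * g₀ * a₀⁻¹) * p.1 := by rw [← heq]; group
          rw [h2]; group
        open scoped commutatorElement in
        have : g₀⁻¹ * p.2 = ⁅g₀⁻¹, p.1⁻¹ * a₀⁆ := by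
          rw [hgw, commutatorElement_def]
          group
        rw [this, commutator_def]
        exact Subgroup.commutator_mem_commutator (Subgroup.mem_top _) (Subgroup.mem_top _)
      have hTk : T.card ≤ S.card := by
        refine card_le_card_of_injOn (fun g => g₀⁻¹ * g) (fun g hg => (mem_filter.1 hg).2) ?_
        intro u _ v _ huv
        exact mul_left_cancel huv
      have hfib : ∀ g ∈ T,
          ((F.filter fun p => p.2 = g).card : ℝ)
            ≤ (((A⁻¹ * A).filter fun x => x * g = g * x).card : ℝ) := by
        intro g hg
        rcases (F.filter fun p => p.2 = g).eq_empty_or_nonempty with he | ⟨⟨a₁, g₁⟩, hp1⟩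
        · rw [he]; simp
        · obtain ⟨hp1F, hp1g⟩ := mem_filter.1 hp1
          obtain ⟨hp1m, hp1x⟩ := mem_filter.1 hp1F
          obtain ⟨ha1, _⟩ := mem_product.1 hp1m
          simp only at hp1g ha1 hp1x
          rw [hp1g] at hp1x
          have : ((F.filter fun p => p.2 = g).card : ℕ)
              ≤ ((A⁻¹ * A).filter fun x => x * g = g * x).card := by
            refine card_le_card_of_injOn (fun p => a₁⁻¹ * p.1) (fun p hp => ?_) ?_
            · obtain ⟨hpF, hpg⟩ := mem_filter.1 hp
              obtain ⟨hpm, hpx⟩ := mem_filter.1 hpF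
              obtain ⟨hq1, _⟩ := mem_product.1 hpm
              refine mem_filter.2 ⟨mul_mem_mul (inv_mem_inv ha1) hq1, ?_⟩
              have heq : p.1 * g * p.1⁻¹ = a₁ * g * a₁⁻¹ := by rw [hpg] at hpx; rw [hpx, hp1x]
              have : a₁⁻¹ * (p.1 * g * p.1⁻¹) * p.1 = a₁⁻¹ * (a₁ * g * a₁⁻¹) * p.1 := by
                rw [heq]
              calc a₁⁻¹ * p.1 * g = a₁⁻¹ * (p.1 * g * p.1⁻¹) * p.1 := by group
                _ = a₁⁻¹ * (a₁ * g * a₁⁻¹) * p.1 := this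
                _ = g * (a₁⁻¹ * p.1) := by group
            · intro p hp q hq hpq
              obtain ⟨_, hpg⟩ := mem_filter.1 hp
              obtain ⟨_, hqg⟩ := mem_filter.1 hq
              have h1 : p.1 = q.1 := mul_left_cancel hpq
              exact Prod.ext h1 (hpg.trans hqg.symm)
          exact_mod_cast this
      have hTA : ∀ g ∈ T, g ∈ A := fun g hg => (mem_filter.1 hg).1
      have hcg : ∀ g ∈ T,
          ((((A⁻¹ * A).filter fun x => x * g = g * x).card : ℝ))
            ≤ (A.card : ℝ) ^ ((1 : ℝ) - δ) / S.card := by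
        intro g hg
        have := h g (hTA g hg)
        rw [le_div_iff₀ hk]
        exact this.le
      calc (F.card : ℝ) = ∑ g ∈ T, ((F.filter fun p => p.2 = g).card : ℝ) := by
            rw [hstep]; push_cast; ring
        _ ≤ ∑ g ∈ T, ((A.card : ℝ) ^ ((1 : ℝ) - δ) / S.card) :=
            Finset.sum_le_sum (fun g hg => (hfib g hg).trans (hcg g hg))
        _ = T.card * ((A.card : ℝ) ^ ((1 : ℝ) - δ) / S.card) := by
            rw [Finset.sum_const, nsmul_eq_mul]
        _ ≤ S.card * ((A.card : ℝ) ^ ((1 : ℝ) - δ) / S.card) := by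
            have : (0:ℝ) ≤ (A.card : ℝ) ^ ((1 : ℝ) - δ) / S.card :=
              div_nonneg (Real.rpow_nonneg hn.le _) hk.le
            exact mul_le_mul_of_nonneg_right (by exact_mod_cast hTk) this
        _ = (A.card : ℝ) ^ ((1 : ℝ) - δ) := by field_simp
  -- double counting
  have hcount : (A ×ˢ A).card
      = ∑ y ∈ A * A * A⁻¹, ((A ×ˢ A).filter fun p => p.1 * p.2 * p.1⁻¹ = y).card := by
    refine card_eq_sum_card_fiberwise (fun p hp => ?_)
    obtain ⟨hp1, hp2⟩ := mem_product.1 hp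
    exact mul_mem_mul (mul_mem_mul hp1 hp2) (inv_mem_inv hp1)
  have h2 : ((A.card : ℝ)) * A.card
      ≤ ((A * A * A⁻¹).card : ℝ) * (A.card : ℝ) ^ ((1 : ℝ) - δ) := by
    have : ((A ×ˢ A).card : ℝ)
        ≤ ∑ _y ∈ A * A * A⁻¹, (A.card : ℝ) ^ ((1 : ℝ) - δ) := by
      rw [hcount]; push_cast
      exact Finset.sum_le_sum (fun y _ => key y)
    rw [Finset.sum_const, nsmul_eq_mul] at this
    calc ((A.card : ℝ)) * A.card = ((A ×ˢ A).card : ℝ) := by rw [card_product]; push_cast; ring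
      _ ≤ _ := this
  have hsplit : ((A.card : ℝ)) * A.card
      = (A.card : ℝ) ^ ((1 : ℝ) + δ) * (A.card : ℝ) ^ ((1 : ℝ) - δ) := by
    rw [← Real.rpow_add hn]
    rw [show (1 : ℝ) + δ + (1 - δ) = 2 by ring]
    rw [show (2:ℝ) = ((2:ℕ):ℝ) by norm_num, Real.rpow_natCast]
    ring
  rw [hsplit] at h2
  have hpos : (0:ℝ) < (A.card : ℝ) ^ ((1 : ℝ) - δ) := Real.rpow_pos_of_pos hn _
  exact le_of_mul_le_mul_right h2 hpos
end

section
/- Let G be a group, H ≤ G a subgroup of index 2, and A' ⊆ G a finite subset not contained in H. Write A' = C ∪ gC' with C, C' ⊆ H, g ∉ H, and e ∈ C'. Then the set A := C ∪ C' ∪ gCg⁻¹ ∪ gC'g⁻¹ ∪ {g²} is contained in A'_3 ∩ H, satisfies (1/2)|A'| ≤ |A| ≤ 4|A'|, contains C ∪ C' and g², satisfies g⁻¹Ag ⊆ A_3, and the subgroup generated by A' equals ⟨A⟩ ∪ g⟨A⟩. -/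
open Finset Pointwise

section Aux

variable {G : Type*} [Group G] [DecidableEq G]

lemma mem_wordBase_of_mem {S : Finset G} {x : G} (h : x ∈ S) : x ∈ S ∪ S⁻¹ ∪ {1} := by
  simp [h]

lemma inv_mem_wordBase_of_mem {S : Finset G} {x : G} (h : x ∈ S) : x⁻¹ ∈ S ∪ S⁻¹ ∪ {1} := by
  have : x⁻¹ ∈ S⁻¹ := Finset.inv_mem_inv h
  simp [this]

lemma one_mem_wordBase (S : Finset G) : (1 : G) ∈ S ∪ S⁻¹ ∪ {1} := by simp

lemma mem_wordSet3 {S : Finset G} {x a b c : G} (ha : a ∈ S ∪ S⁻¹ ∪ {1})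
    (hb : b ∈ S ∪ S⁻¹ ∪ {1}) (hc : c ∈ S ∪ S⁻¹ ∪ {1}) (h : a * b * c = x) :
    x ∈ wordSet S 3 := by
  subst h
  unfold wordSet
  rw [show (3 : ℕ) = 2 + 1 from rfl, pow_succ, sq]
  exact Finset.mul_mem_mul (Finset.mul_mem_mul ha hb) hc

lemma wordSet_subset_closure (S : Finset G) (m : ℕ) :
    ∀ x ∈ wordSet S m, x ∈ Subgroup.closure (S : Set G) := by
  induction m with
  | zero =>
    intro x hx
    simp only [wordSet, pow_zero, Finset.mem_one] at hx
    subst hx; exact one_mem _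
  | succ n ih =>
    intro x hx
    simp only [wordSet, pow_succ] at hx
    obtain ⟨a, ha, b, hb, rfl⟩ := Finset.mem_mul.mp hx
    refine mul_mem (ih a ha) ?_
    simp only [Finset.mem_union, Finset.mem_inv, Finset.mem_singleton] at hb
    rcases hb with (hb | ⟨c, hc, rfl⟩) | rfl
    · exact Subgroup.subset_closure hb
    · exact inv_mem (Subgroup.subset_closure hc)
    · exact one_mem _

end Aux

/-- Passage to an index-2 subgroup: from `A' = C ∪ gC'` not contained in `H`,
the set `A = C ∪ C' ∪ gCg⁻¹ ∪ gC'g⁻¹ ∪ {g²}` lies in `A'_3 ∩ H`, has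
comparable size, contains `C ∪ C'` and `g²`, satisfies `g⁻¹Ag ⊆ A_3`, and
`⟨A'⟩ = ⟨A⟩ ∪ g⟨A⟩`. -/
theorem stmt14 {G : Type*} [Group G] [DecidableEq G] (H : Subgroup G)
    (hH : H.index = 2) (A' C C' : Finset G) (g : G)
    (hC : (C : Set G) ⊆ (H : Set G)) (hC' : (C' : Set G) ⊆ (H : Set G))
    (hg : g ∉ H) (h1 : (1 : G) ∈ C') (hA' : A' = C ∪ g • C') :
    (C ∪ C' ∪ (C.image fun c => g * c * g⁻¹) ∪ (C'.image fun c => g * c * g⁻¹)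
        ∪ {g ^ 2}) ⊆ wordSet A' 3 ∧
    ((C ∪ C' ∪ (C.image fun c => g * c * g⁻¹) ∪ (C'.image fun c => g * c * g⁻¹)
        ∪ {g ^ 2} : Finset G) : Set G) ⊆ (H : Set G) ∧
    A'.card ≤ 2 * (C ∪ C' ∪ (C.image fun c => g * c * g⁻¹)
        ∪ (C'.image fun c => g * c * g⁻¹) ∪ {g ^ 2}).card ∧
    (C ∪ C' ∪ (C.image fun c => g * c * g⁻¹) ∪ (C'.image fun c => g * c * g⁻¹)
        ∪ {g ^ 2}).card ≤ 4 * A'.card ∧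
    C ∪ C' ⊆ (C ∪ C' ∪ (C.image fun c => g * c * g⁻¹)
        ∪ (C'.image fun c => g * c * g⁻¹) ∪ {g ^ 2}) ∧
    g ^ 2 ∈ (C ∪ C' ∪ (C.image fun c => g * c * g⁻¹)
        ∪ (C'.image fun c => g * c * g⁻¹) ∪ {g ^ 2}) ∧
    ((C ∪ C' ∪ (C.image fun c => g * c * g⁻¹) ∪ (C'.image fun c => g * c * g⁻¹)
        ∪ {g ^ 2}).image fun a => g⁻¹ * a * g) ⊆
      wordSet (C ∪ C' ∪ (C.image fun c => g * c * g⁻¹)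
        ∪ (C'.image fun c => g * c * g⁻¹) ∪ {g ^ 2}) 3 ∧
    (Subgroup.closure (A' : Set G) : Set G) =
      (Subgroup.closure ((C ∪ C' ∪ (C.image fun c => g * c * g⁻¹)
          ∪ (C'.image fun c => g * c * g⁻¹) ∪ {g ^ 2} : Finset G) : Set G) : Set G) ∪
        g • (Subgroup.closure ((C ∪ C' ∪ (C.image fun c => g * c * g⁻¹)
          ∪ (C'.image fun c => g * c * g⁻¹) ∪ {g ^ 2} : Finset G) : Set G) : Set G) := by
  set A : Finset G := C ∪ C' ∪ (C.image fun c => g * c * g⁻¹)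
      ∪ (C'.image fun c => g * c * g⁻¹) ∪ {g ^ 2} with hAdef
  -- basic membership facts
  have hmemA : ∀ x : G, x ∈ A ↔ x ∈ C ∨ x ∈ C' ∨ (∃ c ∈ C, g * c * g⁻¹ = x) ∨
      (∃ c ∈ C', g * c * g⁻¹ = x) ∨ x = g ^ 2 := by
    intro x
    simp [hAdef, or_assoc]
    rw [or_comm]; simp only [or_assoc]
  have hCsubA : C ⊆ A := fun x hx => (hmemA x).mpr (Or.inl hx)
  have hC'subA : C' ⊆ A := fun x hx => (hmemA x).mpr (Or.inr (Or.inl hx))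
  have hconjCA : ∀ c ∈ C, g * c * g⁻¹ ∈ A := fun c hc =>
    (hmemA _).mpr (Or.inr (Or.inr (Or.inl ⟨c, hc, rfl⟩)))
  have hconjC'A : ∀ c ∈ C', g * c * g⁻¹ ∈ A := fun c hc =>
    (hmemA _).mpr (Or.inr (Or.inr (Or.inr (Or.inl ⟨c, hc, rfl⟩))))
  have hg2A : g ^ 2 ∈ A := (hmemA _).mpr (Or.inr (Or.inr (Or.inr (Or.inr rfl))))
  have hgA' : g ∈ A' := by
    rw [hA']
    refine Finset.mem_union_right _ ?_
    simpa using Finset.smul_mem_smul_finset (a := g) h1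
  have hCsubA' : C ⊆ A' := by rw [hA']; exact Finset.subset_union_left
  have hgC'subA' : ∀ c ∈ C', g * c ∈ A' := by
    intro c hc
    rw [hA']
    refine Finset.mem_union_right _ ?_
    simpa using Finset.smul_mem_smul_finset (a := g) hc
  -- (1) A ⊆ wordSet A' 3
  have part1 : A ⊆ wordSet A' 3 := by
    intro x hx
    rcases (hmemA x).mp hx with hx | hx | ⟨c, hc, rfl⟩ | ⟨c, hc, rfl⟩ | rfl
    · exact mem_wordSet3 (mem_wordBase_of_mem (hCsubA' hx)) (one_mem_wordBase _)
        (one_mem_wordBase _) (by group)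
    · exact mem_wordSet3 (inv_mem_wordBase_of_mem hgA')
        (mem_wordBase_of_mem (hgC'subA' x hx)) (one_mem_wordBase _) (by group)
    · exact mem_wordSet3 (mem_wordBase_of_mem hgA') (mem_wordBase_of_mem (hCsubA' hc))
        (inv_mem_wordBase_of_mem hgA') rfl
    · exact mem_wordSet3 (mem_wordBase_of_mem (hgC'subA' c hc))
        (inv_mem_wordBase_of_mem hgA') (one_mem_wordBase _) (by group)
    · exact mem_wordSet3 (mem_wordBase_of_mem hgA') (mem_wordBase_of_mem hgA')
        (one_mem_wordBase _) (by rw [pow_two]; group)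
  -- (2) A ⊆ H
  have hconjH : ∀ h : G, h ∈ H → g * h * g⁻¹ ∈ H := by
    intro h hh
    rw [Subgroup.mul_mem_iff_of_index_two hH, Subgroup.mul_mem_iff_of_index_two hH,
      inv_mem_iff]
    tauto
  have part2 : (A : Set G) ⊆ (H : Set G) := by
    intro x hx
    rcases (hmemA x).mp (by exact_mod_cast hx) with hx | hx | ⟨c, hc, rfl⟩ | ⟨c, hc, rfl⟩ | rfl
    · exact hC hx
    · exact hC' hx
    · exact hconjH c (hC hc)
    · exact hconjH c (hC' hc)
    · exact Subgroup.sq_mem_of_index_two hH g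
  -- cardinalities
  have hcard1 : A'.card ≤ 2 * A.card := by
    have h1' : A'.card ≤ C.card + C'.card := by
      rw [hA']
      calc (C ∪ g • C').card ≤ C.card + (g • C').card := Finset.card_union_le _ _
        _ = C.card + C'.card := by rw [Finset.card_smul_finset]
    have h2' : C.card ≤ A.card := Finset.card_le_card hCsubA
    have h3' : C'.card ≤ A.card := Finset.card_le_card hC'subA
    omega
  have hcard2 : A.card ≤ 4 * A'.card := by
    have hdisj : Disjoint C (g • C') := by
      rw [Finset.disjoint_left]
      intro x hxC hxg
      obtain ⟨c, hc, rfl⟩ := Finset.mem_smul_finset.mp hxg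
      apply hg
      have h1'' : g • c ∈ H := hC hxC
      have h2'' : c ∈ H := hC' hc
      have : g • c * c⁻¹ ∈ H := mul_mem h1'' (inv_mem h2'')
      simpa [smul_eq_mul] using this
    have hA'card : A'.card = C.card + C'.card := by
      rw [hA', Finset.card_union_of_disjoint hdisj, Finset.card_smul_finset]
    have hA'pos : 1 ≤ A'.card := Finset.card_pos.mpr ⟨g, hgA'⟩
    have : A.card ≤ C.card + C'.card + C.card + C'.card + 1 := by
      calc A.card ≤ (C ∪ C' ∪ (C.image fun c => g * c * g⁻¹)
            ∪ (C'.image fun c => g * c * g⁻¹)).card + ({g ^ 2} : Finset G).card :=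
            Finset.card_union_le _ _
        _ ≤ (C ∪ C' ∪ (C.image fun c => g * c * g⁻¹)).card
            + (C'.image fun c => g * c * g⁻¹).card + 1 := by
            have := Finset.card_union_le (C ∪ C' ∪ (C.image fun c => g * c * g⁻¹))
              (C'.image fun c => g * c * g⁻¹)
            simp only [Finset.card_singleton]
            omega
        _ ≤ (C ∪ C').card + (C.image fun c => g * c * g⁻¹).card
            + (C'.image fun c => g * c * g⁻¹).card + 1 := by
            have := Finset.card_union_le (C ∪ C') (C.image fun c => g * c * g⁻¹)
            omega
        _ ≤ C.card + C'.card + C.card + C'.card + 1 := by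
            have h1'' := Finset.card_union_le C C'
            have h2'' := Finset.card_image_le (s := C) (f := fun c => g * c * g⁻¹)
            have h3'' := Finset.card_image_le (s := C') (f := fun c => g * c * g⁻¹)
            omega
    omega
  -- (7) g⁻¹ A g ⊆ wordSet A 3
  have part7 : (A.image fun a => g⁻¹ * a * g) ⊆ wordSet A 3 := by
    intro x hx
    obtain ⟨a, ha, rfl⟩ := Finset.mem_image.mp hx
    rcases (hmemA a).mp ha with ha' | ha' | ⟨c, hc, rfl⟩ | ⟨c, hc, rfl⟩ | rfl
    · exact mem_wordSet3 (inv_mem_wordBase_of_mem hg2A)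
        (mem_wordBase_of_mem (hconjCA a ha')) (mem_wordBase_of_mem hg2A) (by group)
    · exact mem_wordSet3 (inv_mem_wordBase_of_mem hg2A)
        (mem_wordBase_of_mem (hconjC'A a ha')) (mem_wordBase_of_mem hg2A) (by group)
    · exact mem_wordSet3 (mem_wordBase_of_mem (hCsubA hc)) (one_mem_wordBase _)
        (one_mem_wordBase _) (by group)
    · exact mem_wordSet3 (mem_wordBase_of_mem (hC'subA hc)) (one_mem_wordBase _)
        (one_mem_wordBase _) (by group)
    · exact mem_wordSet3 (mem_wordBase_of_mem hg2A) (one_mem_wordBase _)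
        (one_mem_wordBase _) (by group)
  -- (8) closure equality
  set K : Subgroup G := Subgroup.closure (A : Set G) with hKdef
  have hg2K : g ^ 2 ∈ K := Subgroup.subset_closure (by exact_mod_cast hg2A)
  have hconjK : ∀ x ∈ K, g * x * g⁻¹ ∈ K := by
    intro x hx
    refine Subgroup.closure_induction ?_ ?_ ?_ ?_ hx
    · intro a ha
      rcases (hmemA a).mp (by exact_mod_cast ha) with ha' | ha' | ⟨c, hc, rfl⟩ | ⟨c, hc, rfl⟩ | rfl
      · exact Subgroup.subset_closure (by exact_mod_cast hconjCA a ha')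
      · exact Subgroup.subset_closure (by exact_mod_cast hconjC'A a ha')
      · have : g * (g * c * g⁻¹) * g⁻¹ = g ^ 2 * c * (g ^ 2)⁻¹ := by rw [pow_two]; group
        rw [this]
        exact mul_mem (mul_mem hg2K (Subgroup.subset_closure (by exact_mod_cast hCsubA hc)))
          (inv_mem hg2K)
      · have : g * (g * c * g⁻¹) * g⁻¹ = g ^ 2 * c * (g ^ 2)⁻¹ := by rw [pow_two]; group
        rw [this]
        exact mul_mem (mul_mem hg2K (Subgroup.subset_closure (by exact_mod_cast hC'subA hc)))
          (inv_mem hg2K)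
      · have : g * g ^ 2 * g⁻¹ = g ^ 2 := by rw [pow_two]; group
        rw [this]; exact hg2K
    · simpa using one_mem K
    · intro x y _ _ hx' hy'
      have : g * (x * y) * g⁻¹ = (g * x * g⁻¹) * (g * y * g⁻¹) := by group
      rw [this]; exact mul_mem hx' hy'
    · intro x _ hx'
      have : g * x⁻¹ * g⁻¹ = (g * x * g⁻¹)⁻¹ := by group
      rw [this]; exact inv_mem hx'
  have hconjK' : ∀ x ∈ K, g⁻¹ * x * g ∈ K := by
    intro x hx
    refine Subgroup.closure_induction ?_ ?_ ?_ ?_ hx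
    · intro a ha
      have : g⁻¹ * a * g ∈ wordSet A 3 :=
        part7 (Finset.mem_image_of_mem _ (by exact_mod_cast ha))
      exact wordSet_subset_closure A 3 _ this
    · simpa using one_mem K
    · intro x y _ _ hx' hy'
      have : g⁻¹ * (x * y) * g = (g⁻¹ * x * g) * (g⁻¹ * y * g) := by group
      rw [this]; exact mul_mem hx' hy'
    · intro x _ hx'
      have : g⁻¹ * x⁻¹ * g = (g⁻¹ * x * g)⁻¹ := by group
      rw [this]; exact inv_mem hx'
  have hmem_smul : ∀ x : G, x ∈ g • (K : Set G) ↔ g⁻¹ * x ∈ K := by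
    intro x
    rw [Set.mem_smul_set_iff_inv_smul_mem]
    simp [smul_eq_mul]
  -- the subgroup with carrier K ∪ gK
  let S : Subgroup G :=
    { carrier := (K : Set G) ∪ g • (K : Set G)
      one_mem' := Or.inl (one_mem K)
      mul_mem' := by
        rintro a b (ha | ha) (hb | hb)
        · exact Or.inl (mul_mem ha hb)
        · refine Or.inr ((hmem_smul _).mpr ?_)
          have hb' := (hmem_smul b).mp hb
          have : g⁻¹ * (a * b) = (g⁻¹ * a * g) * (g⁻¹ * b) := by group
          rw [this]; exact mul_mem (hconjK' a ha) hb'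
        · refine Or.inr ((hmem_smul _).mpr ?_)
          have ha' := (hmem_smul a).mp ha
          have : g⁻¹ * (a * b) = (g⁻¹ * a) * b := by group
          rw [this]; exact mul_mem ha' hb
        · refine Or.inl ?_
          have ha' := (hmem_smul a).mp ha
          have hb' := (hmem_smul b).mp hb
          have : a * b = g ^ 2 * (g⁻¹ * (g⁻¹ * a) * g) * (g⁻¹ * b) := by group
          rw [this]
          exact mul_mem (mul_mem hg2K (hconjK' _ ha')) hb'
      inv_mem' := by
        rintro a (ha | ha)
        · exact Or.inl (inv_mem ha)
        · refine Or.inr ((hmem_smul _).mpr ?_)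
          have ha' := (hmem_smul a).mp ha
          have : g⁻¹ * a⁻¹ = (g⁻¹ * (g⁻¹ * a)⁻¹ * g) * (g ^ 2)⁻¹ := by group
          rw [this]
          exact mul_mem (hconjK' _ (inv_mem ha')) (inv_mem hg2K) }
  have hKleCl : K ≤ Subgroup.closure (A' : Set G) := by
    rw [hKdef, Subgroup.closure_le]
    intro a ha
    exact wordSet_subset_closure A' 3 a (part1 (by exact_mod_cast ha))
  have hgCl : g ∈ Subgroup.closure (A' : Set G) := Subgroup.subset_closure (by exact_mod_cast hgA')
  have part8 : (Subgroup.closure (A' : Set G) : Set G) = (K : Set G) ∪ g • (K : Set G) := by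
    apply Set.Subset.antisymm
    · have hle : Subgroup.closure (A' : Set G) ≤ S := by
        rw [Subgroup.closure_le]
        intro a ha
        have ha' : a ∈ A' := by exact_mod_cast ha
        rw [hA'] at ha'
        rcases Finset.mem_union.mp ha' with h | h
        · exact Or.inl (Subgroup.subset_closure (by exact_mod_cast hCsubA h))
        · obtain ⟨c, hc, rfl⟩ := Finset.mem_smul_finset.mp h
          refine Or.inr ((hmem_smul _).mpr ?_)
          have : g⁻¹ * (g • c) = c := by simp [smul_eq_mul]
          rw [this]
          exact Subgroup.subset_closure (by exact_mod_cast hC'subA hc)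
      exact fun x hx => hle hx
    · rintro x (hx | hx)
      · exact hKleCl hx
      · obtain hx' := (hmem_smul x).mp hx
        have : x = g * (g⁻¹ * x) := by group
        rw [this]
        exact mul_mem hgCl (hKleCl hx')
  exact ⟨part1, part2, hcard1, hcard2,
    Finset.union_subset (hCsubA.trans (by rw [hAdef])) (hC'subA.trans (by rw [hAdef])),
    hg2A, part7, part8⟩
end

section
/- Let G be a group, and suppose there is no strictly increasing chain of subgroups {e} < G₁ < G₂ < ⋯ < G_r < [G,G] with r ≥ ℓ. Let A ⊆ G be finite and B ⊆ A. Then there exist k, k' depending only on ℓ and elements g₁, …, g_k ∈ A_{k'} such that the subgroup generated by B ∪ g₁Bg₁⁻¹ ∪ ⋯ ∪ g_kBg_k⁻¹ is a normal subgroup of ⟨A⟩. Concretely, one may take k = 2^ℓ − 1 and k' = ℓ. -/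
open Finset Pointwise
open scoped commutatorElement

namespace Stmt17Aux

variable {G : Type*} [Group G] [DecidableEq G]

lemma one_mem_wordSet (A : Finset G) (m : ℕ) : (1 : G) ∈ wordSet A m := by
  induction m with
  | zero => simp [wordSet]
  | succ n ih =>
      have h1 : (1 : G) ∈ A ∪ A⁻¹ ∪ {1} := by simp
      have := Finset.mul_mem_mul ih h1
      rw [mul_one] at this
      simpa [wordSet, pow_succ] using this

lemma wordSet_mono {A : Finset G} {n : ℕ} {x : G} (hx : x ∈ wordSet A n) :
    x ∈ wordSet A (n + 1) := by
  have h1 : (1 : G) ∈ A ∪ A⁻¹ ∪ {1} := by simp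
  have := Finset.mul_mem_mul hx h1
  rw [mul_one] at this
  simpa [wordSet, pow_succ] using this

lemma mul_mem_wordSet {A : Finset G} {n : ℕ} {t x : G} (ht : t ∈ A ∪ A⁻¹)
    (hx : x ∈ wordSet A n) : t * x ∈ wordSet A (n + 1) := by
  have htb : t ∈ A ∪ A⁻¹ ∪ {1} := Finset.mem_union_left _ ht
  have := Finset.mul_mem_mul htb hx
  simpa [wordSet, pow_succ'] using this

/-- The set of conjugates of elements of `B` by elements of `W`. -/
def SW (B W : Finset G) : Set G := ⋃ w ∈ W, (fun b => w * b * w⁻¹) '' (B : Set G)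

/-- The subgroup generated by conjugates of `B` by elements of `W`. -/
def NW (B W : Finset G) : Subgroup G := Subgroup.closure (SW B W)

lemma mem_SW {B W : Finset G} {w b : G} (hw : w ∈ W) (hb : b ∈ (B : Set G)) :
    w * b * w⁻¹ ∈ SW B W :=
  Set.mem_biUnion hw ⟨b, hb, rfl⟩

lemma SW_mono {B W W' : Finset G} (h : W ⊆ W') : SW B W ⊆ SW B W' := by
  apply Set.iUnion₂_subset
  intro w hw
  intro y hy
  obtain ⟨b, hb, rfl⟩ := hy
  exact mem_SW (h hw) hb

lemma NW_mono {B W W' : Finset G} (h : W ⊆ W') : NW B W ≤ NW B W' :=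
  Subgroup.closure_mono (SW_mono h)

lemma closureB_le_NW {B W : Finset G} (h1 : (1 : G) ∈ W) :
    Subgroup.closure (B : Set G) ≤ NW B W := by
  apply Subgroup.closure_mono
  intro b hb
  have := mem_SW h1 hb
  simpa using this

lemma NW_le_sup (B W : Finset G) :
    NW B W ≤ Subgroup.closure (B : Set G) ⊔ commutator G := by
  apply (Subgroup.closure_le _).mpr
  intro y hy
  simp only [SW, Set.mem_iUnion] at hy
  obtain ⟨w, hw, b, hb, rfl⟩ := hy
  have hbm : b ∈ Subgroup.closure (B : Set G) := Subgroup.subset_closure hb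
  have hcm : ⁅b⁻¹, w⁆ ∈ commutator G := by
    rw [commutator_def]
    exact Subgroup.commutator_mem_commutator (Subgroup.mem_top _) (Subgroup.mem_top _)
  have heq : w * b * w⁻¹ = b * ⁅b⁻¹, w⁆ := by
    rw [commutatorElement_def]; group
  show w * b * w⁻¹ ∈ _
  rw [heq]
  exact mul_mem (le_sup_left (a := Subgroup.closure (B : Set G)) hbm)
    (le_sup_right (b := commutator G) hcm)

lemma sandwich {N M : Subgroup G} (B : Finset G)
    (hBN : Subgroup.closure (B : Set G) ≤ N) (hNM : N ≤ M)
    (hM : M ≤ Subgroup.closure (B : Set G) ⊔ commutator G)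
    (h : N ⊓ commutator G = M ⊓ commutator G) : N = M := by
  refine le_antisymm hNM fun m hm => ?_
  have hmem : m ∈ (↑(Subgroup.closure (B : Set G) ⊔ commutator G) : Set G) := hM hm
  rw [Subgroup.mul_normal] at hmem
  obtain ⟨h', hh, c, hc, rfl⟩ := hmem
  have hx : h' ∈ N := hBN hh
  have hcM : c ∈ M := by
    have := mul_mem (inv_mem (hNM hx)) hm
    simpa [mul_assoc] using this
  have hcN : c ∈ N ⊓ commutator G := h ▸ ⟨hcM, hc⟩
  exact mul_mem hx hcN.1

lemma conj_mem_NW_smul {B W : Finset G} (t : G) {x : G} (hx : x ∈ NW B W) :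
    t * x * t⁻¹ ∈ NW B (t • W) := by
  refine Subgroup.closure_induction
    (p := fun x _ => t * x * t⁻¹ ∈ NW B (t • W)) ?_ ?_ ?_ ?_ hx
  · intro y hy
    simp only [SW, Set.mem_iUnion] at hy
    obtain ⟨w, hw, b, hb, rfl⟩ := hy
    have hmem : (t * w) * b * (t * w)⁻¹ ∈ SW B (t • W) :=
      mem_SW (Finset.smul_mem_smul_finset hw) hb
    have : t * (w * b * w⁻¹) * t⁻¹ = (t * w) * b * (t * w)⁻¹ := by group
    rw [this]
    exact Subgroup.subset_closure hmem
  · simpa using one_mem _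
  · intro x y _ _ hxm hym
    have : t * (x * y) * t⁻¹ = (t * x * t⁻¹) * (t * y * t⁻¹) := by group
    rw [this]
    exact mul_mem hxm hym
  · intro x _ hxm
    have : t * x⁻¹ * t⁻¹ = (t * x * t⁻¹)⁻¹ := by group
    rw [this]
    exact inv_mem hxm

/-- The main inductive construction. -/
lemma build (A B : Finset G) : ∀ n : ℕ, ∃ W : Finset G, (1 : G) ∈ W ∧ W.card ≤ 2 ^ n ∧
    W ⊆ wordSet A n ∧
    ((∀ a ∈ A, ∀ x ∈ NW B W, a * x * a⁻¹ ∈ NW B W ∧ a⁻¹ * x * a ∈ NW B W) ∨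
      ∃ c : Fin n → Subgroup G, StrictMono c ∧
        ∀ i, ⊥ < c i ∧ c i ≤ NW B W ⊓ commutator G) := by
  intro n
  induction n with
  | zero =>
      refine ⟨{1}, Finset.mem_singleton_self 1, by simp, ?_, Or.inr ⟨fun i => i.elim0,
        fun a => a.elim0, fun i => i.elim0⟩⟩
      intro x hx
      rw [Finset.mem_singleton] at hx
      subst hx
      exact one_mem_wordSet A 0
  | succ n ih =>
      obtain ⟨W, h1, hcard, hsub, hd⟩ := ih
      by_cases hnorm : ∀ a ∈ A, ∀ x ∈ NW B W, a * x * a⁻¹ ∈ NW B W ∧ a⁻¹ * x * a ∈ NW B W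
      · exact ⟨W, h1, hcard.trans (Nat.pow_le_pow_right (by norm_num) (Nat.le_succ n)),
          fun w hw => wordSet_mono (hsub hw), Or.inl hnorm⟩
      · obtain ⟨c, hmono, hprop⟩ := hd.resolve_left hnorm
        push_neg at hnorm
        obtain ⟨a, ha, x, hx, hax⟩ := hnorm
        obtain ⟨t, htA, ht⟩ : ∃ t, t ∈ A ∪ A⁻¹ ∧ t * x * t⁻¹ ∉ NW B W := by
          by_cases hP : a * x * a⁻¹ ∈ NW B W
          · exact ⟨a⁻¹, Finset.mem_union_right _ (Finset.inv_mem_inv ha),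
              by simpa using hax hP⟩
          · exact ⟨a, Finset.mem_union_left _ ha, hP⟩
        refine ⟨W ∪ t • W, Finset.mem_union_left _ h1, ?_, ?_, ?_⟩
        · calc (W ∪ t • W).card ≤ W.card + (t • W).card := Finset.card_union_le _ _
            _ = W.card + W.card := by rw [Finset.card_smul_finset]
            _ ≤ 2 ^ n + 2 ^ n := Nat.add_le_add hcard hcard
            _ = 2 ^ (n + 1) := by ring
        · intro w hw
          rcases Finset.mem_union.mp hw with hw | hw
          · exact wordSet_mono (hsub hw)
          · obtain ⟨u, hu, rfl⟩ := Finset.mem_smul_finset.mp hw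
            exact mul_mem_wordSet htA (hsub hu)
        · -- strictness
          have hle : NW B W ≤ NW B (W ∪ t • W) := NW_mono Finset.subset_union_left
          have htx' : t * x * t⁻¹ ∈ NW B (W ∪ t • W) :=
            NW_mono Finset.subset_union_right (conj_mem_NW_smul t hx)
          have hltC : NW B W ⊓ commutator G < NW B (W ∪ t • W) ⊓ commutator G := by
            refine lt_of_le_of_ne (inf_le_inf_right _ hle) fun h => ?_
            have heq := sandwich B (closureB_le_NW h1) hle (NW_le_sup B _) h
            apply ht
            rw [heq]
            exact htx'
          refine Or.inr ⟨fun i : Fin (n + 1) =>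
            if h : (i : ℕ) < n then c ⟨i, h⟩ else NW B (W ∪ t • W) ⊓ commutator G, ?_, ?_⟩
          · intro i j hij
            have hijn : (i : ℕ) < (j : ℕ) := hij
            by_cases hj : (j : ℕ) < n
            · have hi : (i : ℕ) < n := lt_trans hijn hj
              simp only [dif_pos hi, dif_pos hj]
              exact hmono (show (⟨(i : ℕ), hi⟩ : Fin n) < ⟨(j : ℕ), hj⟩ from hijn)
            · simp only [dif_neg hj]
              by_cases hi : (i : ℕ) < n
              · simp only [dif_pos hi]
                exact lt_of_le_of_lt (hprop ⟨(i : ℕ), hi⟩).2 hltC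
              · exfalso
                have hi2 := i.isLt
                have hj2 := j.isLt
                omega
          · intro i
            by_cases hi : (i : ℕ) < n
            · simp only [dif_pos hi]
              exact ⟨(hprop _).1, (hprop _).2.trans hltC.le⟩
            · simp only [dif_neg hi]
              exact ⟨lt_of_le_of_lt bot_le hltC, le_rfl⟩

end Stmt17Aux

open Stmt17Aux in
/-- If `G` has no strictly increasing chain of `ℓ` subgroups strictly between
`{e}` and `[G,G]`, then for `B ⊆ A` there are `2^ℓ − 1` elements `gᵢ ∈ A_ℓ`
such that `⟨B ∪ ⋃ᵢ gᵢBgᵢ⁻¹⟩` is normal in `⟨A⟩`. -/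
theorem stmt17 {G : Type*} [Group G] [DecidableEq G] (ℓ : ℕ) (hℓ : 1 ≤ ℓ)
    (hchain : ¬ ∃ c : Fin ℓ → Subgroup G, StrictMono c ∧
      ∀ i, ⊥ < c i ∧ c i < commutator G)
    (A B : Finset G) (hB : B ⊆ A) :
    ∃ g : Fin (2 ^ ℓ - 1) → G, (∀ i, g i ∈ wordSet A ℓ) ∧
      ∀ a ∈ Subgroup.closure (A : Set G),
        ∀ x ∈ Subgroup.closure
            ((B : Set G) ∪ ⋃ i, (fun b => g i * b * (g i)⁻¹) '' (B : Set G)),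
          a * x * a⁻¹ ∈ Subgroup.closure
            ((B : Set G) ∪ ⋃ i, (fun b => g i * b * (g i)⁻¹) '' (B : Set G)) := by
  obtain ⟨W, h1, hcard, hsub, hd⟩ := build A B ℓ
  -- Resolve the disjunction: `NW B W` is normalized by `A` and `A⁻¹`.
  have hnorm : ∀ a ∈ A, ∀ x ∈ NW B W, a * x * a⁻¹ ∈ NW B W ∧ a⁻¹ * x * a ∈ NW B W := by
    rcases hd with h | ⟨c, hmono, hprop⟩
    · exact h
    · by_cases hC : commutator G ≤ NW B W
      · intro a _ x hx
        constructor
        · have h1' : ⁅a, x⁆ ∈ NW B W := hC (by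
            rw [commutator_def]
            exact Subgroup.commutator_mem_commutator (Subgroup.mem_top _) (Subgroup.mem_top _))
          have heq : a * x * a⁻¹ = ⁅a, x⁆ * x := by rw [commutatorElement_def]; group
          rw [heq]; exact mul_mem h1' hx
        · have h1' : ⁅a⁻¹, x⁆ ∈ NW B W := hC (by
            rw [commutator_def]
            exact Subgroup.commutator_mem_commutator (Subgroup.mem_top _) (Subgroup.mem_top _))
          have heq : a⁻¹ * x * a = ⁅a⁻¹, x⁆ * x := by rw [commutatorElement_def]; group
          rw [heq]; exact mul_mem h1' hx
      · exact absurd ⟨c, hmono, fun i => ⟨(hprop i).1,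
          lt_of_le_of_ne ((hprop i).2.trans inf_le_right)
            fun h => hC (h ▸ ((hprop i).2.trans inf_le_left))⟩⟩ hchain
  -- Convert `W` into a function `Fin (2^ℓ - 1) → G`.
  set l := (W.erase 1).toList with hl
  have hlen : l.length ≤ 2 ^ ℓ - 1 := by
    rw [hl, Finset.length_toList, Finset.card_erase_of_mem h1]
    exact Nat.sub_le_sub_right hcard 1
  set g : Fin (2 ^ ℓ - 1) → G := fun i => l.getD (i : ℕ) 1 with hg
  have hgW : ∀ i, g i ∈ W := by
    intro i
    by_cases h : (i : ℕ) < l.length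
    · rw [hg]
      simp only
      rw [List.getD_eq_getElem l 1 h]
      exact Finset.erase_subset _ _ (Finset.mem_toList.mp (List.getElem_mem h))
    · rw [hg]
      simp only
      rw [List.getD_eq_default l 1 (le_of_not_gt h)]
      exact h1
  have hgmem : ∀ i, g i ∈ wordSet A ℓ := fun i => hsub (hgW i)
  have hSeq : (B : Set G) ∪ ⋃ i, (fun b => g i * b * (g i)⁻¹) '' (B : Set G) = SW B W := by
    apply Set.Subset.antisymm
    · apply Set.union_subset
      · intro b hb
        have := mem_SW h1 hb
        simpa using this
      · apply Set.iUnion_subset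
        intro i
        rintro _ ⟨b, hb, rfl⟩
        exact mem_SW (hgW i) hb
    · intro y hy
      simp only [SW, Set.mem_iUnion] at hy
      obtain ⟨w, hw, b, hb, rfl⟩ := hy
      by_cases hw1 : w = 1
      · subst hw1
        exact Or.inl (by simpa using hb)
      · have hwl : w ∈ l := Finset.mem_toList.mpr (Finset.mem_erase.mpr ⟨hw1, hw⟩)
        obtain ⟨j, hj, hjw⟩ := List.getElem_of_mem hwl
        have hjlt : j < 2 ^ ℓ - 1 := lt_of_lt_of_le hj hlen
        refine Or.inr (Set.mem_iUnion.mpr ⟨⟨j, hjlt⟩, ⟨b, hb, ?_⟩⟩)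
        have hgj : g ⟨j, hjlt⟩ = w := by
          rw [hg]
          simp only
          rw [List.getD_eq_getElem l 1 hj]
          exact hjw
        rw [hgj]
  refine ⟨g, hgmem, ?_⟩
  rw [hSeq]
  intro a ha
  have key : ∀ x ∈ NW B W, a * x * a⁻¹ ∈ NW B W ∧ a⁻¹ * x * a ∈ NW B W := by
    refine Subgroup.closure_induction
      (p := fun a _ => ∀ x ∈ NW B W, a * x * a⁻¹ ∈ NW B W ∧ a⁻¹ * x * a ∈ NW B W)
      ?_ ?_ ?_ ?_ ha
    · intro y hy
      exact hnorm y hy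
    · intro x hx
      have h1x : (1 : G) * x * 1⁻¹ = x := by group
      have h2x : (1 : G)⁻¹ * x * 1 = x := by group
      exact ⟨by rw [h1x]; exact hx, by rw [h2x]; exact hx⟩
    · intro u v _ _ hu hv x hx
      constructor
      · have : u * v * x * (u * v)⁻¹ = u * (v * x * v⁻¹) * u⁻¹ := by group
        rw [this]
        exact (hu _ (hv x hx).1).1
      · have : (u * v)⁻¹ * x * (u * v) = v⁻¹ * (u⁻¹ * x * u) * v := by group
        rw [this]
        exact (hv _ (hu x hx).2).2
    · intro u _ hu x hx
      rw [inv_inv]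
      exact ⟨(hu x hx).2, (hu x hx).1⟩
  exact fun x hx => (key x hx).1
end
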